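/- arXiv:0707.0338 — 4 statements merged into one kernel-verified Lean document; each statement's English description precedes it below -/
import Mathlib

section
/- Let A be a 3×3 real symmetric matrix lying in Γ₂⁺, i.e. satisfying σ₁(A) > 0 and σ₂(A) > 0. Then both matrices −A + σ₁(A)·I and A + (1/3)·σ₁(A)·I are positive definite. -/
open Matrix

lemma gamma2_aux (a b c : ℝ) (hsum : 0 < a + b + c)
    (hsig : 0 < a * b + a * c + b * c) :
    0 < (a + b + c) - a ∧ 0 < a + (1/3) * (a + b + c) := by
  have h1 : 0 < b + c := by
    by_contra h
    push_neg at h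
    nlinarith [sq_nonneg (b - c), sq_nonneg (b + c)]
  constructor
  · linarith
  · nlinarith [sq_nonneg (b - c)]

lemma conj_posDef {n : Type*} [Fintype n] [DecidableEq n]
    {V B : Matrix n n ℝ} (hV : V ∈ Matrix.unitaryGroup n ℝ) (hB : B.PosDef) :
    (V * B * Vᴴ).PosDef := by
  refine Matrix.posDef_iff_dotProduct_mulVec.mpr ⟨?_, ?_⟩
  · exact Matrix.isHermitian_mul_mul_conjTranspose V hB.1
  · intro x hx
    have hy : Vᴴ *ᵥ x ≠ 0 := by
      intro h
      apply hx
      have h2 : V *ᵥ (Vᴴ *ᵥ x) = x := by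
        rw [mulVec_mulVec, ← Matrix.star_eq_conjTranspose,
          mem_unitaryGroup_iff.mp hV, one_mulVec]
      rw [h, mulVec_zero] at h2
      exact h2.symm
    have := (Matrix.posDef_iff_dotProduct_mulVec.mp hB).2 hy
    simpa only [star_mulVec, conjTranspose_conjTranspose, dotProduct_mulVec,
      vecMul_vecMul, Matrix.mul_assoc, mulVec_mulVec] using this

theorem gamma2_plus_posdef (A : Matrix (Fin 3) (Fin 3) ℝ) (hA : A.IsSymm)
    (h1 : 0 < Matrix.trace A)
    (h2 : 0 < ((Matrix.trace A) ^ 2 - Matrix.trace (A * A)) / 2) :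
    (-A + Matrix.trace A • (1 : Matrix (Fin 3) (Fin 3) ℝ)).PosDef ∧
    (A + (1 / 3 : ℝ) • Matrix.trace A • (1 : Matrix (Fin 3) (Fin 3) ℝ)).PosDef := by
  have hH : A.IsHermitian := by
    rw [Matrix.IsHermitian, conjTranspose_eq_transpose_of_trivial]; exact hA
  set V : Matrix (Fin 3) (Fin 3) ℝ := (hH.eigenvectorUnitary : Matrix (Fin 3) (Fin 3) ℝ) with hVdef
  have hVmem : V ∈ Matrix.unitaryGroup (Fin 3) ℝ := hH.eigenvectorUnitary.2
  set ev : Fin 3 → ℝ := hH.eigenvalues with hev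
  have hspec : A = V * Matrix.diagonal ev * Vᴴ := by
    have := hH.spectral_theorem
    simpa [Matrix.star_eq_conjTranspose, Function.comp] using this
  have hVV : V * Vᴴ = 1 := by
    rw [← Matrix.star_eq_conjTranspose]
    exact mem_unitaryGroup_iff.mp hVmem
  have hVV' : Vᴴ * V = 1 := by
    rw [← Matrix.star_eq_conjTranspose]
    exact mem_unitaryGroup_iff'.mp hVmem
  have htr : Matrix.trace A = ev 0 + ev 1 + ev 2 := by
    rw [hspec, Matrix.trace_mul_cycle, hVV', one_mul,
      Matrix.trace_diagonal, Fin.sum_univ_three]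
  have htr2 : Matrix.trace (A * A) = ev 0 ^ 2 + ev 1 ^ 2 + ev 2 ^ 2 := by
    have hAA : A * A = V * Matrix.diagonal (fun i => ev i ^ 2) * Vᴴ := by
      rw [hspec]
      calc V * Matrix.diagonal ev * Vᴴ * (V * Matrix.diagonal ev * Vᴴ)
          = V * (Matrix.diagonal ev * (Vᴴ * V) * Matrix.diagonal ev) * Vᴴ := by
            simp only [Matrix.mul_assoc]
        _ = V * Matrix.diagonal (fun i => ev i ^ 2) * Vᴴ := by
            rw [hVV', Matrix.mul_one, Matrix.diagonal_mul_diagonal]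
            simp [pow_two]
    rw [hAA, Matrix.trace_mul_cycle, hVV', one_mul,
      Matrix.trace_diagonal, Fin.sum_univ_three]
  have hsum : 0 < ev 0 + ev 1 + ev 2 := by rw [← htr]; exact h1
  have hsig : 0 < ev 0 * ev 1 + ev 0 * ev 2 + ev 1 * ev 2 := by
    have e : ev 0 * ev 1 + ev 0 * ev 2 + ev 1 * ev 2
        = ((ev 0 + ev 1 + ev 2) ^ 2 - (ev 0 ^ 2 + ev 1 ^ 2 + ev 2 ^ 2)) / 2 := by ring
    rw [e, ← htr, ← htr2]; exact h2
  have k0 := gamma2_aux (ev 0) (ev 1) (ev 2) (by linarith) (by linarith)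
  have k1 := gamma2_aux (ev 1) (ev 0) (ev 2) (by linarith) (by nlinarith [hsig])
  have k2 := gamma2_aux (ev 2) (ev 0) (ev 1) (by linarith) (by nlinarith [hsig])
  have key : ∀ i, 0 < Matrix.trace A - ev i ∧ 0 < ev i + (1/3) * Matrix.trace A := by
    intro i
    fin_cases i
    · refine ⟨?_, ?_⟩
      · show 0 < Matrix.trace A - ev 0; rw [htr]; linarith [k0.1]
      · show 0 < ev 0 + (1/3) * Matrix.trace A; rw [htr]; linarith [k0.2]
    · refine ⟨?_, ?_⟩
      · show 0 < Matrix.trace A - ev 1; rw [htr]; linarith [k1.1]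
      · show 0 < ev 1 + (1/3) * Matrix.trace A; rw [htr]; linarith [k1.2]
    · refine ⟨?_, ?_⟩
      · show 0 < Matrix.trace A - ev 2; rw [htr]; linarith [k2.1]
      · show 0 < ev 2 + (1/3) * Matrix.trace A; rw [htr]; linarith [k2.2]
  constructor
  · have heq : -A + Matrix.trace A • (1 : Matrix (Fin 3) (Fin 3) ℝ)
        = V * Matrix.diagonal (fun i => Matrix.trace A - ev i) * Vᴴ := by
      have hd : Matrix.diagonal (fun i => Matrix.trace A - ev i)
          = Matrix.trace A • (1 : Matrix (Fin 3) (Fin 3) ℝ) - Matrix.diagonal ev := by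
        rw [Matrix.smul_one_eq_diagonal, ← Matrix.diagonal_sub]
      rw [hd, Matrix.mul_sub, Matrix.sub_mul, ← hspec, Matrix.mul_smul, Matrix.smul_mul,
        Matrix.mul_one, hVV]
      abel
    rw [heq]
    exact conj_posDef hVmem (Matrix.posDef_diagonal_iff.mpr fun i => (key i).1)
  · have heq : A + (1/3 : ℝ) • Matrix.trace A • (1 : Matrix (Fin 3) (Fin 3) ℝ)
        = V * Matrix.diagonal (fun i => ev i + (1/3) * Matrix.trace A) * Vᴴ := by
      have hd : Matrix.diagonal (fun i => ev i + (1/3) * Matrix.trace A)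
          = Matrix.diagonal ev + ((1/3 : ℝ) * Matrix.trace A) • (1 : Matrix (Fin 3) (Fin 3) ℝ) := by
        rw [Matrix.smul_one_eq_diagonal, ← Matrix.diagonal_add]
      rw [hd, Matrix.mul_add, Matrix.add_mul, ← hspec, Matrix.mul_smul, Matrix.smul_mul,
        Matrix.mul_one, hVV, smul_smul]
    rw [heq]
    exact conj_posDef hVmem (Matrix.posDef_diagonal_iff.mpr fun i => (key i).2)
end

section
/- Let A be a 3×3 real symmetric matrix and let t ≤ 2/3 be a real number. Suppose that the matrix Aᵗ := A + (1−t)(tr A)·I satisfies σ₁(Aᵗ) > 0 and σ₂(Aᵗ) > 0. Then tr A > 0 and A < (3−2t)(tr A)·I, i.e. (3−2t)(tr A)·I − A is positive definite. (Applied to the Schouten tensor A = A¹_g̃, this is the pointwise inequality A¹_g̃ < (3−2t)σ₁(g̃⁻¹A¹_g̃)·g̃ used in the proof of the gradient-term estimate.) -/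
open Matrix

lemma aux_unitary_conj_posDef {n : Type*} [Fintype n] [DecidableEq n]
    {U D : Matrix n n ℝ} (hU : U ∈ Matrix.unitaryGroup n ℝ) (hD : D.PosDef) :
    (U * D * star U).PosDef := by
  refine Matrix.PosDef.of_dotProduct_mulVec_pos ?_ ?_
  · have h := Matrix.isHermitian_conjTranspose_mul_mul (star U) hD.1
    simpa [Matrix.star_eq_conjTranspose] using h
  · intro x hx
    have hUx : star U *ᵥ x ≠ 0 := by
      intro h
      apply hx
      have h2 : U *ᵥ (star U *ᵥ x) = U *ᵥ 0 := by rw [h]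
      rwa [Matrix.mulVec_mulVec, Matrix.mem_unitaryGroup_iff.mp hU, Matrix.one_mulVec,
        Matrix.mulVec_zero] at h2
    have h := hD.dotProduct_mulVec_pos hUx
    have hrw : U = (star U)ᴴ := by simp [Matrix.star_eq_conjTranspose]
    nth_rw 1 [hrw]
    simpa only [star_mulVec, dotProduct_mulVec, vecMul_vecMul] using h

lemma aux_scalar (x y z : ℝ) (h1 : 0 < x + y + z) (h2 : 0 < x * y + x * z + y * z) :
    x < x + y + z := by
  nlinarith [sq_nonneg (y - z), sq_nonneg (y + z), mul_nonneg h1.le h1.le]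

set_option maxHeartbeats 1000000 in
theorem schouten_upper_bound (A : Matrix (Fin 3) (Fin 3) ℝ) (hA : A.IsSymm)
    (t : ℝ) (ht : t ≤ 2 / 3)
    (h1 : 0 < Matrix.trace (A + ((1 - t) * Matrix.trace A) • (1 : Matrix (Fin 3) (Fin 3) ℝ)))
    (h2 : 0 < ((Matrix.trace (A + ((1 - t) * Matrix.trace A) • (1 : Matrix (Fin 3) (Fin 3) ℝ))) ^ 2
        - Matrix.trace ((A + ((1 - t) * Matrix.trace A) • (1 : Matrix (Fin 3) (Fin 3) ℝ))
          * (A + ((1 - t) * Matrix.trace A) • (1 : Matrix (Fin 3) (Fin 3) ℝ)))) / 2) :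
    0 < Matrix.trace A ∧
    (((3 - 2 * t) * Matrix.trace A) • (1 : Matrix (Fin 3) (Fin 3) ℝ) - A).PosDef := by
  have hH : A.IsHermitian := by
    rwa [Matrix.IsHermitian, Matrix.conjTranspose_eq_transpose_of_trivial]
  have hspec := hH.spectral_theorem
  have hWV : star (hH.eigenvectorUnitary : Matrix (Fin 3) (Fin 3) ℝ) *
      (hH.eigenvectorUnitary : Matrix (Fin 3) (Fin 3) ℝ) = 1 :=
    Matrix.mem_unitaryGroup_iff'.mp hH.eigenvectorUnitary.2
  have hVW : (hH.eigenvectorUnitary : Matrix (Fin 3) (Fin 3) ℝ) *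
      star (hH.eigenvectorUnitary : Matrix (Fin 3) (Fin 3) ℝ) = 1 :=
    Matrix.mem_unitaryGroup_iff.mp hH.eigenvectorUnitary.2
  have hD : Matrix.diagonal ((RCLike.ofReal : ℝ → ℝ) ∘ hH.eigenvalues)
      = Matrix.diagonal hH.eigenvalues := by congr 1
  have hspec' : A = (hH.eigenvectorUnitary : Matrix (Fin 3) (Fin 3) ℝ) *
      Matrix.diagonal hH.eigenvalues *
      star (hH.eigenvectorUnitary : Matrix (Fin 3) (Fin 3) ℝ) := by
    rw [← hD]; exact hspec
  have htr : A.trace = hH.eigenvalues 0 + hH.eigenvalues 1 + hH.eigenvalues 2 := by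
    conv_lhs => rw [hspec']
    rw [Matrix.trace_mul_cycle, hWV, one_mul, Matrix.trace_diagonal, Fin.sum_univ_three]
  have htr2 : (A * A).trace
      = hH.eigenvalues 0 ^ 2 + hH.eigenvalues 1 ^ 2 + hH.eigenvalues 2 ^ 2 := by
    conv_lhs => rw [hspec']
    rw [show (hH.eigenvectorUnitary : Matrix (Fin 3) (Fin 3) ℝ) * Matrix.diagonal hH.eigenvalues *
        star (hH.eigenvectorUnitary : Matrix (Fin 3) (Fin 3) ℝ) *
        ((hH.eigenvectorUnitary : Matrix (Fin 3) (Fin 3) ℝ) * Matrix.diagonal hH.eigenvalues *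
        star (hH.eigenvectorUnitary : Matrix (Fin 3) (Fin 3) ℝ))
        = (hH.eigenvectorUnitary : Matrix (Fin 3) (Fin 3) ℝ) *
          (Matrix.diagonal hH.eigenvalues * Matrix.diagonal hH.eigenvalues) *
          star (hH.eigenvectorUnitary : Matrix (Fin 3) (Fin 3) ℝ) from by
      rw [mul_assoc _ _ ((hH.eigenvectorUnitary : Matrix (Fin 3) (Fin 3) ℝ) * _ * _),
        ← mul_assoc (star _), ← mul_assoc (star _), hWV, one_mul]
      noncomm_ring]
    rw [Matrix.trace_mul_cycle, hWV, one_mul, Matrix.diagonal_mul_diagonal,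
      Matrix.trace_diagonal, Fin.sum_univ_three]
    ring
  set x := hH.eigenvalues 0 with hx
  set y := hH.eigenvalues 1 with hy
  set z := hH.eigenvalues 2 with hz
  have hexp : ∀ c : ℝ,
      (A + c • (1 : Matrix (Fin 3) (Fin 3) ℝ)) * (A + c • (1 : Matrix (Fin 3) (Fin 3) ℝ))
      = A * A + (2 * c) • A + (c ^ 2) • (1 : Matrix (Fin 3) (Fin 3) ℝ) := by
    intro c
    simp [add_mul, mul_add, smul_mul_assoc, Matrix.mul_smul, smul_smul, two_mul, add_smul,
      pow_two]
    abel
  have H1 : 0 < (x + y + z) + (1 - t) * (x + y + z) * 3 := by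
    have h := h1
    rw [Matrix.trace_add, Matrix.trace_smul, Matrix.trace_one, htr] at h
    simp only [smul_eq_mul, Fintype.card_fin, Nat.cast_ofNat] at h
    linarith
  have H2 : 0 < (((x + y + z) + (1 - t) * (x + y + z) * 3) ^ 2
      - ((x ^ 2 + y ^ 2 + z ^ 2) + 2 * ((1 - t) * (x + y + z)) * (x + y + z)
        + 3 * ((1 - t) * (x + y + z)) ^ 2)) / 2 := by
    have h := h2
    rw [hexp, Matrix.trace_add, Matrix.trace_add, Matrix.trace_add, Matrix.trace_smul,
      Matrix.trace_smul, Matrix.trace_smul, Matrix.trace_one, htr, htr2] at h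
    simp only [smul_eq_mul, Fintype.card_fin, Nat.cast_ofNat] at h
    nlinarith [h]
  set C : ℝ := (1 - t) * (x + y + z) with hC
  have H1' : 0 < (x + C) + (y + C) + (z + C) := by rw [hC]; linarith
  have H2' : 0 < (x + C) * (y + C) + (x + C) * (z + C) + (y + C) * (z + C) := by
    rw [hC]; nlinarith [H2]
  have hbx : x + C < (x + C) + (y + C) + (z + C) := aux_scalar _ _ _ H1' H2'
  have hby : y + C < (x + C) + (y + C) + (z + C) := by
    have := aux_scalar (y + C) (x + C) (z + C) (by linarith) (by nlinarith [H2'])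
    linarith
  have hbz : z + C < (x + C) + (y + C) + (z + C) := by
    have := aux_scalar (z + C) (x + C) (y + C) (by linarith) (by nlinarith [H2'])
    linarith
  have hs : 0 < x + y + z := by
    by_contra hs'
    push_neg at hs'
    have hprod : 0 ≤ (2 / 3 - t) * (-(x + y + z)) :=
      mul_nonneg (by linarith) (by linarith)
    nlinarith [H1, hprod]
  have hsA : 0 < A.trace := by rw [htr]; exact hs
  refine ⟨hsA, ?_⟩
  have hball : ∀ i : Fin 3, hH.eigenvalues i < (3 - 2 * t) * (x + y + z) := by
    intro i
    fin_cases i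
    · show x < _
      rw [hC] at hbx; nlinarith [hbx]
    · show y < _
      rw [hC] at hby; nlinarith [hby]
    · show z < _
      rw [hC] at hbz; nlinarith [hbz]
  clear_value x y z
  rw [htr]
  have key : ((3 - 2 * t) * (x + y + z)) • (1 : Matrix (Fin 3) (Fin 3) ℝ) - A
      = (hH.eigenvectorUnitary : Matrix (Fin 3) (Fin 3) ℝ) *
        Matrix.diagonal (fun i => (3 - 2 * t) * (x + y + z) - hH.eigenvalues i) *
        star (hH.eigenvectorUnitary : Matrix (Fin 3) (Fin 3) ℝ) := by
    have hone : ((3 - 2 * t) * (x + y + z)) • (1 : Matrix (Fin 3) (Fin 3) ℝ)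
        = (hH.eigenvectorUnitary : Matrix (Fin 3) (Fin 3) ℝ) *
          (((3 - 2 * t) * (x + y + z)) • (1 : Matrix (Fin 3) (Fin 3) ℝ)) *
          star (hH.eigenvectorUnitary : Matrix (Fin 3) (Fin 3) ℝ) := by
      rw [mul_smul_comm, smul_mul_assoc, mul_one, hVW]
    have hdiag : Matrix.diagonal (fun i => (3 - 2 * t) * (x + y + z) - hH.eigenvalues i)
        = ((3 - 2 * t) * (x + y + z)) • (1 : Matrix (Fin 3) (Fin 3) ℝ)
          - Matrix.diagonal hH.eigenvalues := by
      ext i j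
      by_cases h : i = j <;> simp [Matrix.diagonal_apply, Matrix.one_apply, h]
    rw [hdiag, Matrix.mul_sub, Matrix.sub_mul, ← hone, ← hspec']
  rw [key]
  apply aux_unitary_conj_posDef hH.eigenvectorUnitary.2
  rw [Matrix.posDef_diagonal_iff]
  intro i
  exact sub_pos.mpr (hball i)
end

section
/- For every real number t one has 128·P₂(t) ≥ (5−4t)², where P₂(t) := (1/16)(1−t)(5−3t) − (1/24)(7/10 − t). Consequently, for t < 5/4 and with the choice ε(t) := 32·P₂(t)/(5−4t) > 0, the three coefficient inequalities used in the lower-bound estimate hold: 8P₂(t)/ε(t) − (1−t) − 1/4 = 0, 2P₂(t)/ε(t) − (1−t)/4 ≥ 0, and (3−2t)/4 − P₂(t)/ε(t)² − 4P₂(t)/ε(t) ≥ 0. -/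
theorem coefficient_inequalities (t : ℝ) :
    128 * ((1 / 16) * (1 - t) * (5 - 3 * t) - (1 / 24) * (7 / 10 - t)) ≥ (5 - 4 * t) ^ 2 ∧
    (t < 5 / 4 →
      letI P₂ := (1 / 16) * (1 - t) * (5 - 3 * t) - (1 / 24) * (7 / 10 - t)
      letI ε := 32 * P₂ / (5 - 4 * t)
      0 < ε ∧
      8 * P₂ / ε - (1 - t) - 1 / 4 = 0 ∧
      2 * P₂ / ε - (1 - t) / 4 ≥ 0 ∧
      (3 - 2 * t) / 4 - P₂ / ε ^ 2 - 4 * P₂ / ε ≥ 0) := by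
  have key : 128 * ((1 / 16) * (1 - t) * (5 - 3 * t) - (1 / 24) * (7 / 10 - t))
      ≥ (5 - 4 * t) ^ 2 := by nlinarith [sq_nonneg (t - 7/6), sq_nonneg t, sq_nonneg (3*t - 7/2)]
  refine ⟨key, fun ht => ?_⟩
  have h5 : (0:ℝ) < 5 - 4 * t := by linarith
  set P := (1 / 16) * (1 - t) * (5 - 3 * t) - (1 / 24) * (7 / 10 - t) with hPdef
  have hP : 0 < P := by nlinarith [sq_nonneg (5 - 4*t)]
  have hε : (0:ℝ) < 32 * P / (5 - 4 * t) := by positivity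
  refine ⟨hε, ?_, ?_, ?_⟩
  · field_simp
    ring
  · have h2 : 2 * P / (32 * P / (5 - 4 * t)) = (5 - 4 * t) / 16 := by
      field_simp; ring
    rw [h2]; linarith
  · have hεne : 32 * P / (5 - 4 * t) ≠ 0 := ne_of_gt hε
    rw [ge_iff_le, ← sub_nonneg] at key ⊢
    have : (3 - 2 * t) / 4 - P / (32 * P / (5 - 4 * t)) ^ 2 - 4 * P / (32 * P / (5 - 4 * t))
        = (128 * P - (5 - 4*t)^2) / (1024 * P) := by
      field_simp
      ring
    rw [this]
    have hden : (0:ℝ) ≤ 1024 * P := by linarith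
    simpa using div_nonneg key hden
end

section
/- Let (λ₁, λ₂, λ₃) ∈ ℝ³ satisfy σ₁(λ) > 0 and σ₂(λ) > 0. Then each λᵢ satisfies −(1/3)σ₁(λ) < λᵢ < σ₁(λ); in particular the sum of any two of the λᵢ is positive. -/
theorem gamma2_eigenvalue_bounds (l₁ l₂ l₃ : ℝ)
    (h1 : 0 < l₁ + l₂ + l₃) (h2 : 0 < l₁ * l₂ + l₁ * l₃ + l₂ * l₃) :
    (-(1 / 3) * (l₁ + l₂ + l₃) < l₁ ∧ l₁ < l₁ + l₂ + l₃) ∧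
    (-(1 / 3) * (l₁ + l₂ + l₃) < l₂ ∧ l₂ < l₁ + l₂ + l₃) ∧
    (-(1 / 3) * (l₁ + l₂ + l₃) < l₃ ∧ l₃ < l₁ + l₂ + l₃) ∧
    0 < l₁ + l₂ ∧ 0 < l₁ + l₃ ∧ 0 < l₂ + l₃ := by
  have k1 : 0 < l₂ + l₃ := by nlinarith [sq_nonneg (l₂ - l₃), sq_nonneg (l₂ + l₃), mul_pos h1 h1]
  have k2 : 0 < l₁ + l₃ := by nlinarith [sq_nonneg (l₁ - l₃), sq_nonneg (l₁ + l₃), mul_pos h1 h1]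
  have k3 : 0 < l₁ + l₂ := by nlinarith [sq_nonneg (l₁ - l₂), sq_nonneg (l₁ + l₂), mul_pos h1 h1]
  have b1 : -(1 / 3) * (l₁ + l₂ + l₃) < l₁ := by nlinarith [sq_nonneg (l₂ - l₃), sq_nonneg (l₂ + l₃)]
  have b2 : -(1 / 3) * (l₁ + l₂ + l₃) < l₂ := by nlinarith [sq_nonneg (l₁ - l₃), sq_nonneg (l₁ + l₃)]
  have b3 : -(1 / 3) * (l₁ + l₂ + l₃) < l₃ := by nlinarith [sq_nonneg (l₁ - l₂), sq_nonneg (l₁ + l₂)]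
  exact ⟨⟨b1, by linarith⟩, ⟨b2, by linarith⟩, ⟨b3, by linarith⟩, k3, k2, k1⟩
end
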